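/- For a constant K > 1, a probability vector u on [1:q], and a composition t of n with |t_i - (n+1)u_i| ≥ K·sqrt(n log n) for some index i, the multinomial probability satisfies Mult_{n,u}(t) ≤ n^{-(K²-1)/2} for all sufficiently large n. -/
import Mathlib


open Finset

lemma mult_term_le_one {q n : ℕ} (hn : 0 < n) (t : Fin q → ℕ) (ht : ∑ i, t i = n) :
    (Nat.multinomial Finset.univ t : ℝ) * ∏ i, ((t i : ℝ) / n) ^ t i ≤ 1 := by
  have hn' : (n : ℝ) ≠ 0 := Nat.cast_ne_zero.mpr hn.ne'
  have hsum : (∑ i, (t i : ℝ) / n) = 1 := by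
    rw [← Finset.sum_div, ← Nat.cast_sum, ht, div_self hn']
  have h := Finset.sum_pow_eq_sum_piAntidiag Finset.univ (fun i => (t i : ℝ) / n) n
  rw [hsum, one_pow] at h
  have hmem : t ∈ Finset.piAntidiag (Finset.univ : Finset (Fin q)) n := by
    simp [Finset.mem_piAntidiag, ht]
  rw [h]
  refine Finset.single_le_sum (f := fun k => (Nat.multinomial Finset.univ k : ℝ)
      * ∏ i, ((t i : ℝ) / n) ^ k i) (fun k _ => ?_) hmem
  have h2 : (0:ℝ) ≤ ∏ i, ((t i : ℝ) / n) ^ k i :=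
    Finset.prod_nonneg fun i _ => pow_nonneg (by positivity) _
  positivity

lemma pow_le_exp_aux {x : ℝ} (hx : 0 ≤ x) (m : ℕ) : x ^ m ≤ Real.exp (m * (x - 1)) := by
  calc x ^ m ≤ (Real.exp (x - 1)) ^ m := by
        refine pow_le_pow_left₀ hx ?_ m
        linarith [Real.add_one_le_exp (x - 1)]
    _ = Real.exp (m * (x - 1)) := by rw [← Real.exp_nat_mul]

/-- Multinomial pmf with `n` trials and category probabilities `u`. -/
noncomputable def multPMF (q n : ℕ) (u : Fin q → ℝ) (t : Fin q → ℕ) : ℝ :=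
  if (∑ i, t i) = n then (Nat.multinomial Finset.univ t : ℝ) * ∏ i, u i ^ t i else 0

set_option maxHeartbeats 1000000 in
/-- If some coordinate of a composition `t` of `n` deviates from `(n+1)u_i` by at least
`K√(n log n)` with `K > 1`, then `Mult_{n,u}(t) ≤ n^{-(K²-1)/2}` for all large `n`. -/
theorem multinomial_tail_bound (q : ℕ) (hq : 2 ≤ q) (K : ℝ) (hK : 1 < K)
    (u : Fin q → ℝ) (hu0 : ∀ i, 0 ≤ u i) (hu1 : ∑ i, u i = 1) :
    ∃ N : ℕ, ∀ n ≥ N, ∀ t : Fin q → ℕ, (∑ i, t i) = n →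
      (∃ i, K * Real.sqrt ((n : ℝ) * Real.log n) ≤ |(t i : ℝ) - ((n : ℝ) + 1) * u i|) →
      multPMF q n u t ≤ (n : ℝ) ^ (-(K ^ 2 - 1) / 2) := by
  refine ⟨4, fun n hn t ht hdev => ?_⟩
  obtain ⟨i, hi⟩ := hdev
  have hn0 : 0 < n := by omega
  have hnR : (0:ℝ) < n := by exact_mod_cast hn0
  have hn4 : (4:ℝ) ≤ n := by exact_mod_cast hn
  have hnne : (n:ℝ) ≠ 0 := hnR.ne'
  -- log n ≥ 1
  have hlog : 1 ≤ Real.log n := by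
    rw [Real.le_log_iff_exp_le hnR]
    have := Real.exp_one_lt_d9
    linarith
  have hlog0 : 0 ≤ Real.log n := by linarith
  -- L = sqrt(n log n)
  set L : ℝ := Real.sqrt ((n:ℝ) * Real.log n) with hLdef
  have hnl4 : (4:ℝ) ≤ (n:ℝ) * Real.log n := by nlinarith
  have hL2 : L ^ 2 = (n:ℝ) * Real.log n := Real.sq_sqrt (by positivity)
  have hL : 2 ≤ L := by
    have h4 : Real.sqrt 4 ≤ L := Real.sqrt_le_sqrt hnl4
    have : Real.sqrt 4 = 2 := by
      rw [show (4:ℝ) = 2 ^ 2 by norm_num, Real.sqrt_sq (by norm_num)]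
    linarith
  -- empirical distribution
  set p : Fin q → ℝ := fun j => (t j : ℝ) / n with hpdef
  have hp0 : ∀ j, 0 ≤ p j := fun j => by positivity
  have hpsum : ∑ j, p j = 1 := by
    rw [hpdef, ← Finset.sum_div, ← Nat.cast_sum, ht, div_self hnne]
  -- the Hellinger-type sum
  set S : ℝ := ∑ j, Real.sqrt (p j * u j) with hSdef
  -- key identity: t j * sqrt(u j / p j) = n * sqrt(p j * u j)
  have hkey : ∀ j, (t j : ℝ) * Real.sqrt (u j / p j) = (n:ℝ) * Real.sqrt (p j * u j) := by
    intro j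
    rcases Nat.eq_zero_or_pos (t j) with h | h
    · simp [hpdef, h]
    · have htj0 : (0:ℝ) < t j := by exact_mod_cast h
      have hpj : 0 < p j := by rw [hpdef]; positivity
      have htj : (t j : ℝ) = n * p j := by rw [hpdef]; field_simp
      have hsp : Real.sqrt (p j) * Real.sqrt (p j) = p j := Real.mul_self_sqrt hpj.le
      have hsp0 : Real.sqrt (p j) ≠ 0 := (Real.sqrt_pos.mpr hpj).ne'
      rw [Real.sqrt_div (hu0 j), Real.sqrt_mul hpj.le, htj]
      have hds : p j / Real.sqrt (p j) = Real.sqrt (p j) := Real.div_sqrt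
      calc (↑n * p j) * (Real.sqrt (u j) / Real.sqrt (p j))
          = ↑n * (p j / Real.sqrt (p j)) * Real.sqrt (u j) := by ring
        _ = ↑n * (Real.sqrt (p j) * Real.sqrt (u j)) := by rw [hds]; ring
  -- step 1: multPMF ≤ exp(2n(S-1))
  have step1 : multPMF q n u t ≤ Real.exp (2 * n * (S - 1)) := by
    rw [multPMF, if_pos ht]
    have hfac : ∀ j, u j ^ t j = p j ^ t j * (u j / p j) ^ t j := by
      intro j
      rcases Nat.eq_zero_or_pos (t j) with h | h
      · simp [h]
      · have hpj : p j ≠ 0 := by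
          rw [hpdef]
          have : (0:ℝ) < t j := by exact_mod_cast h
          positivity
        rw [← mul_pow, mul_div_cancel₀ _ hpj]
    calc (Nat.multinomial Finset.univ t : ℝ) * ∏ j, u j ^ t j
        = ((Nat.multinomial Finset.univ t : ℝ) * ∏ j, p j ^ t j) * ∏ j, (u j / p j) ^ t j := by
          rw [Finset.prod_congr rfl fun j _ => hfac j, Finset.prod_mul_distrib]; ring
      _ ≤ 1 * Real.exp (2 * n * (S - 1)) := by
          refine mul_le_mul (by rw [hpdef]; exact mult_term_le_one hn0 t ht) ?_
            (Finset.prod_nonneg fun j _ => pow_nonneg (div_nonneg (hu0 j) (hp0 j)) _)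
            one_pos.le
          calc ∏ j, (u j / p j) ^ t j
              ≤ ∏ j, Real.exp ((2 * t j : ℕ) * (Real.sqrt (u j / p j) - 1)) := by
                refine Finset.prod_le_prod
                  (fun j _ => pow_nonneg (div_nonneg (hu0 j) (hp0 j)) _) ?_
                intro j _
                have h1 : (u j / p j) ^ t j = (Real.sqrt (u j / p j)) ^ (2 * t j) := by
                  rw [pow_mul, Real.sq_sqrt (div_nonneg (hu0 j) (hp0 j))]
                rw [h1]
                exact pow_le_exp_aux (Real.sqrt_nonneg _) (2 * t j)
            _ = Real.exp (∑ j, (2 * t j : ℕ) * (Real.sqrt (u j / p j) - 1)) := by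
                rw [Real.exp_sum]
            _ = Real.exp (2 * n * (S - 1)) := by
                congr 1
                have : ∀ j, ((2 * t j : ℕ) : ℝ) * (Real.sqrt (u j / p j) - 1)
                    = 2 * ((n:ℝ) * Real.sqrt (p j * u j)) - 2 * (t j : ℝ) := by
                  intro j
                  push_cast
                  rw [mul_sub, show (2:ℝ) * (t j) * Real.sqrt (u j / p j)
                      = 2 * ((t j : ℝ) * Real.sqrt (u j / p j)) by ring, hkey j]
                  ring
                rw [Finset.sum_congr rfl fun j _ => this j, Finset.sum_sub_distrib,
                  ← Finset.mul_sum, ← Finset.mul_sum]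
                have hts : ∑ x : Fin q, (2:ℝ) * (t x : ℝ) = 2 * (n : ℝ) := by
                  rw [← Finset.mul_sum, ← Nat.cast_sum, ht]
                rw [hts, ← hSdef]
                ring
      _ = Real.exp (2 * n * (S - 1)) := one_mul _
  -- step 2: Pinsker-type bound: 1 - S ≥ δ²/2 where δ = |p i - u i|
  set δ : ℝ := |p i - u i| with hδdef
  have step2 : δ ^ 2 / 2 ≤ 1 - S := by
    set a : Fin q → ℝ := fun j => Real.sqrt (p j) with hadef
    set b : Fin q → ℝ := fun j => Real.sqrt (u j) with hbdef
    have ha2 : ∀ j, a j ^ 2 = p j := fun j => Real.sq_sqrt (hp0 j)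
    have hb2 : ∀ j, b j ^ 2 = u j := fun j => Real.sq_sqrt (hu0 j)
    have hab : ∀ j, a j * b j = Real.sqrt (p j * u j) := fun j =>
      (Real.sqrt_mul (hp0 j) (u j)).symm
    have hsa : ∑ j, a j ^ 2 = 1 := by rw [Finset.sum_congr rfl fun j _ => ha2 j, hpsum]
    have hsb : ∑ j, b j ^ 2 = 1 := by rw [Finset.sum_congr rfl fun j _ => hb2 j, hu1]
    have hsab : ∑ j, a j * b j = S := by
      rw [Finset.sum_congr rfl fun j _ => hab j, hSdef]
    have hdiff : ∑ j, (a j - b j) ^ 2 = 2 - 2 * S := by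
      have : ∀ j, (a j - b j) ^ 2 = a j ^ 2 + b j ^ 2 - 2 * (a j * b j) := by intro j; ring
      rw [Finset.sum_congr rfl fun j _ => this j, Finset.sum_sub_distrib,
        Finset.sum_add_distrib, hsa, hsb, ← Finset.mul_sum, hsab]
      ring
    have hS1 : S ≤ 1 := by
      have := Finset.sum_nonneg (fun j (_ : j ∈ Finset.univ) => sq_nonneg (a j - b j))
      rw [hdiff] at this; linarith
    have hplus : ∑ j, (a j + b j) ^ 2 = 2 + 2 * S := by
      have : ∀ j, (a j + b j) ^ 2 = a j ^ 2 + b j ^ 2 + 2 * (a j * b j) := by intro j; ring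
      rw [Finset.sum_congr rfl fun j _ => this j, Finset.sum_add_distrib,
        Finset.sum_add_distrib, hsa, hsb, ← Finset.mul_sum, hsab]
      ring
    -- V = total variation sum
    set V : ℝ := ∑ j, |p j - u j| with hVdef
    have hV2δ : 2 * δ ≤ V := by
      have hsplit : V = |p i - u i| + ∑ j ∈ Finset.univ.erase i, |p j - u j| := by
        rw [hVdef, ← Finset.add_sum_erase _ _ (Finset.mem_univ i)]
      have hzero : ∑ j, (p j - u j) = 0 := by
        rw [Finset.sum_sub_distrib, hpsum, hu1]; ring
      have herase : ∑ j ∈ Finset.univ.erase i, (p j - u j) = -(p i - u i) := by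
        have h2 : ∑ j ∈ Finset.univ.erase i, (p j - u j) + (p i - u i)
            = ∑ j, (p j - u j) := Finset.sum_erase_add _ _ (Finset.mem_univ i)
        rw [hzero] at h2
        linarith
      have habs : δ ≤ ∑ j ∈ Finset.univ.erase i, |p j - u j| := by
        calc δ = |∑ j ∈ Finset.univ.erase i, (p j - u j)| := by rw [herase, abs_neg, hδdef]
          _ ≤ ∑ j ∈ Finset.univ.erase i, |p j - u j| := Finset.abs_sum_le_sum_abs _ _
      rw [hsplit]
      have : δ = |p i - u i| := hδdef
      linarith
    have hVcs : V ^ 2 ≤ (2 - 2 * S) * (2 + 2 * S) := by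
      have hpt : ∀ j, |p j - u j| = |a j - b j| * (a j + b j) := by
        intro j
        have : p j - u j = (a j - b j) * (a j + b j) := by
          rw [← ha2 j, ← hb2 j]; ring
        rw [this, abs_mul, abs_of_nonneg (by positivity : (0:ℝ) ≤ a j + b j)]
      calc V ^ 2 = (∑ j, |a j - b j| * (a j + b j)) ^ 2 := by
            rw [hVdef, Finset.sum_congr rfl fun j _ => hpt j]
        _ ≤ (∑ j, |a j - b j| ^ 2) * ∑ j, (a j + b j) ^ 2 :=
            Finset.sum_mul_sq_le_sq_mul_sq _ _ _
        _ = (2 - 2 * S) * (2 + 2 * S) := by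
            rw [Finset.sum_congr rfl fun j _ => sq_abs (a j - b j), hdiff, hplus]
    have hS0 : 0 ≤ S := Finset.sum_nonneg fun j _ => Real.sqrt_nonneg _
    nlinarith [sq_nonneg V, sq_nonneg δ, abs_nonneg (p i - u i)]
  -- step 3: δ lower bound
  have huile : u i ≤ 1 := by
    calc u i ≤ ∑ j, u j := Finset.single_le_sum (fun j _ => hu0 j) (Finset.mem_univ i)
      _ = 1 := hu1
  have hD : K * L - 1 ≤ (n:ℝ) * δ := by
    have h1 : |(t i : ℝ) - ((n:ℝ) + 1) * u i| ≤ |(t i : ℝ) - (n:ℝ) * u i| + u i := by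
      have : (t i : ℝ) - ((n:ℝ) + 1) * u i = ((t i : ℝ) - (n:ℝ) * u i) - u i := by ring
      rw [this]
      calc |((t i : ℝ) - (n:ℝ) * u i) - u i| ≤ |(t i : ℝ) - (n:ℝ) * u i| + |u i| :=
            abs_sub _ _
        _ = |(t i : ℝ) - (n:ℝ) * u i| + u i := by rw [abs_of_nonneg (hu0 i)]
    have h2 : (n:ℝ) * δ = |(t i : ℝ) - (n:ℝ) * u i| := by
      rw [hδdef, hpdef]
      rw [show (t i : ℝ) / n - u i = ((t i : ℝ) - (n:ℝ) * u i) / n by field_simp]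
      rw [abs_div, abs_of_pos hnR]
      field_simp
    rw [h2]
    linarith
  have hKL1 : 0 ≤ K * L - 1 := by nlinarith
  have hδ0 : 0 ≤ δ := abs_nonneg _
  -- step 4: n δ² ≥ (K²-1)/2 log n
  have step4 : (K ^ 2 - 1) / 2 * Real.log n ≤ n * δ ^ 2 := by
    have hsq : (K * L - 1) ^ 2 ≤ ((n:ℝ) * δ) ^ 2 := by
      apply pow_le_pow_left₀ hKL1 hD
    have hmain : (K ^ 2 - 1) / 2 * L ^ 2 ≤ (K * L - 1) ^ 2 := by
      nlinarith [mul_nonneg (show (0:ℝ) ≤ L by linarith) (sq_nonneg (K - 1)),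
        mul_nonneg (mul_nonneg (show (0:ℝ) ≤ L - 2 by linarith)
          (show (0:ℝ) ≤ K ^ 2 + 1 by positivity)) (show (0:ℝ) ≤ L by linarith)]
    have : (K ^ 2 - 1) / 2 * ((n:ℝ) * Real.log n) ≤ ((n:ℝ) * δ) ^ 2 := by
      rw [← hL2]; linarith
    have hexp : ((n:ℝ) * δ) ^ 2 = (n:ℝ) * ((n:ℝ) * δ ^ 2) := by ring
    rw [hexp] at this
    have h5 : ((K ^ 2 - 1) / 2 * Real.log n) * n ≤ ((n:ℝ) * δ ^ 2) * n := by
      calc ((K ^ 2 - 1) / 2 * Real.log n) * n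
          = (K ^ 2 - 1) / 2 * ((n:ℝ) * Real.log n) := by ring
        _ ≤ ((n:ℝ) * δ) ^ 2 := by rw [← hL2]; linarith [hmain, hsq]
        _ = ((n:ℝ) * δ ^ 2) * n := by ring
    exact le_of_mul_le_mul_right h5 hnR
  -- conclusion
  calc multPMF q n u t ≤ Real.exp (2 * n * (S - 1)) := step1
    _ ≤ Real.exp (Real.log n * (-(K ^ 2 - 1) / 2)) := by
        apply Real.exp_le_exp.mpr
        have h1 := mul_le_mul_of_nonneg_left step2 hnR.le
        nlinarith [step4]
    _ = (n:ℝ) ^ (-(K ^ 2 - 1) / 2) := (Real.rpow_def_of_pos hnR _).symm
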